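/- (Theorem 4.5, necessity: η'₂ is reducible under the three equalities.) Let n ≥ 3 and f, w, y, v ∈ ℂ with f ≠ 0, v ≠ 0, and suppose f = v, w + f²·y·v⁻¹ = 1, and v·y + w = 1. Let u ∈ ℂⁿ be the vector with coordinates u_k = v^{n−k} for k = 1, …, n. Then every matrix in the family 𝒮 = { L_i(!![0, f; f⁻¹, 0]), L_i(!![w, f²·y; y, w]), L_i(!![0, v; v⁻¹, 0]) : 1 ≤ i ≤ n−1 } fixes u, i.e. M.mulVec u = u for every M ∈ 𝒮. Consequently the line U = ℂ∙u is a submodule of ℂⁿ with ⊥ ≠ U ≠ ⊤ that is invariant under 𝒮, so the representation η'₂ of VST_n is reducible. -/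

import Mathlib

/-- `Lmat n i M` is the `n × n` matrix agreeing with the identity outside rows and
columns `i, i+1` (0-indexed), with `2 × 2` block `M` there. -/
def Lmat {R : Type*} [Zero R] [One R] (n : ℕ) (i : ℕ) (M : Matrix (Fin 2) (Fin 2) R) :
    Matrix (Fin n) (Fin n) R :=
  Matrix.of fun a b =>
    if a.val = i ∧ b.val = i then M 0 0
    else if a.val = i ∧ b.val = i + 1 then M 0 1
    else if a.val = i + 1 ∧ b.val = i then M 1 0
    else if a.val = i + 1 ∧ b.val = i + 1 then M 1 1
    else if a.val = b.val then 1 else 0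

lemma twosum {n : ℕ} (a b : Fin n) (hab : a ≠ b) (g : Fin n → ℂ)
    (hg : ∀ j, j ≠ a → j ≠ b → g j = 0) : ∑ j, g j = g a + g b := by
  rw [show Finset.univ = insert a ({b} : Finset (Fin n)) ∪ (Finset.univ \ insert a {b}) by
    simp [Finset.union_comm, Finset.sdiff_union_of_subset]]
  rw [Finset.sum_union Finset.disjoint_sdiff,
    Finset.sum_insert (by simpa using hab), Finset.sum_singleton,
    Finset.sum_eq_zero, add_zero]
  intro j hj
  simp only [Finset.mem_sdiff, Finset.mem_insert, Finset.mem_singleton] at hj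
  exact hg j (fun h => hj.2 (Or.inl h)) (fun h => hj.2 (Or.inr h))

lemma key {n i : ℕ} (a b : Fin n) (ha : a.val = i) (hb : b.val = i + 1)
    (M : Matrix (Fin 2) (Fin 2) ℂ) (u : Fin n → ℂ)
    (h0 : M 0 0 * u a + M 0 1 * u b = u a)
    (h1 : M 1 0 * u a + M 1 1 * u b = u b) :
    (Lmat n i M).mulVec u = u := by
  have hab : a ≠ b := by intro h; rw [h, hb] at ha; omega
  funext k
  rw [Matrix.mulVec, dotProduct]
  by_cases hk1 : k.val = i
  · rw [twosum a b hab]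
    · have e1 : Lmat n i M k a = M 0 0 := by simp [Lmat, hk1, ha]
      have e2 : Lmat n i M k b = M 0 1 := by simp [Lmat, hk1, hb] <;> omega
      have hk : k = a := Fin.ext (by omega)
      rw [e1, e2, h0, hk]
    · intro j hja hjb
      have h1' : j.val ≠ i := fun h => hja (Fin.ext (by omega))
      have h2' : j.val ≠ i + 1 := fun h => hjb (Fin.ext (by omega))
      simp [Lmat, hk1, h1', h2'] <;> omega
  · by_cases hk2 : k.val = i + 1
    · rw [twosum a b hab]
      · have e1 : Lmat n i M k a = M 1 0 := by simp [Lmat, hk1, hk2, ha] <;> omega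
        have e2 : Lmat n i M k b = M 1 1 := by simp [Lmat, hk1, hk2, hb] <;> omega
        have hk : k = b := Fin.ext (by omega)
        rw [e1, e2, h1, hk]
      · intro j hja hjb
        have h1' : j.val ≠ i := fun h => hja (Fin.ext (by omega))
        have h2' : j.val ≠ i + 1 := fun h => hjb (Fin.ext (by omega))
        simp [Lmat, hk1, hk2, h1', h2'] <;> omega
    · rw [Finset.sum_eq_single k]
      · simp [Lmat, hk1, hk2]
      · intro j _ hj
        have hjk : j.val ≠ k.val := fun h => hj (Fin.ext h)
        simp [Lmat, hk1, hk2, hjk] <;> omega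
      · simp


/-- (Theorem 4.5, necessity.) Under the equalities `f = v`, `w + f²y v⁻¹ = 1` and
`vy + w = 1`, every matrix of the representation `η'₂` fixes the vector
`u = (v^{n-1}, v^{n-2}, …, v, 1)`, so the line it spans is a nontrivial proper
invariant submodule: `η'₂` is reducible. -/
theorem eta2_prime_reducible (n : ℕ) (hn : 3 ≤ n) (f w y v : ℂ)
    (hf : f ≠ 0) (hv : v ≠ 0)
    (h1 : f = v) (h2 : w + f ^ 2 * y * v⁻¹ = 1) (h3 : v * y + w = 1) :
    (∀ M ∈ ({M | (∃ i : Fin (n - 1), M = Lmat n i.val !![0, f; f⁻¹, 0]) ∨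
                 (∃ i : Fin (n - 1), M = Lmat n i.val !![w, f ^ 2 * y; y, w]) ∨
                 (∃ i : Fin (n - 1), M = Lmat n i.val !![0, v; v⁻¹, 0])} :
        Set (Matrix (Fin n) (Fin n) ℂ)),
      M.mulVec (fun k : Fin n => v ^ (n - 1 - (k : ℕ))) = fun k : Fin n => v ^ (n - 1 - (k : ℕ))) ∧
    Submodule.span ℂ {(fun k => v ^ (n - 1 - (k : ℕ)) : Fin n → ℂ)} ≠ ⊥ ∧
    Submodule.span ℂ {(fun k => v ^ (n - 1 - (k : ℕ)) : Fin n → ℂ)} ≠ ⊤ ∧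
    (∀ M ∈ ({M | (∃ i : Fin (n - 1), M = Lmat n i.val !![0, f; f⁻¹, 0]) ∨
                 (∃ i : Fin (n - 1), M = Lmat n i.val !![w, f ^ 2 * y; y, w]) ∨
                 (∃ i : Fin (n - 1), M = Lmat n i.val !![0, v; v⁻¹, 0])} :
        Set (Matrix (Fin n) (Fin n) ℂ)),
      ∀ x ∈ Submodule.span ℂ {(fun k => v ^ (n - 1 - (k : ℕ)) : Fin n → ℂ)},
        M.mulVec x ∈ Submodule.span ℂ {(fun k => v ^ (n - 1 - (k : ℕ)) : Fin n → ℂ)}) := by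
  set u : Fin n → ℂ := fun k => v ^ (n - 1 - (k : ℕ)) with hu
  have hfix : ∀ M ∈ ({M | (∃ i : Fin (n - 1), M = Lmat n i.val !![0, f; f⁻¹, 0]) ∨
                 (∃ i : Fin (n - 1), M = Lmat n i.val !![w, f ^ 2 * y; y, w]) ∨
                 (∃ i : Fin (n - 1), M = Lmat n i.val !![0, v; v⁻¹, 0])} :
        Set (Matrix (Fin n) (Fin n) ℂ)), M.mulVec u = u := by
    intro M hM
    have hstep : ∀ i : Fin (n - 1),
        u ⟨i.val, by omega⟩ = v * u ⟨i.val + 1, by omega⟩ := by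
      intro i
      have hi := i.isLt
      simp only [hu]
      rw [← pow_succ']
      congr 1
      omega
    rcases hM with ⟨i, rfl⟩ | ⟨i, rfl⟩ | ⟨i, rfl⟩
    · apply key (n := n) (i := i.val) ⟨i.val, by have := i.isLt; omega⟩
        ⟨i.val + 1, by have := i.isLt; omega⟩ rfl rfl
      · rw [hstep i]; simp [h1]
      · rw [hstep i]; simp [h1, hv]
    · apply key (n := n) (i := i.val) ⟨i.val, by have := i.isLt; omega⟩
        ⟨i.val + 1, by have := i.isLt; omega⟩ rfl rfl
      · rw [hstep i,
          show (!![w, f ^ 2 * y; y, w] : Matrix (Fin 2) (Fin 2) ℂ) 0 0 = w from rfl,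
          show (!![w, f ^ 2 * y; y, w] : Matrix (Fin 2) (Fin 2) ℂ) 0 1 = f ^ 2 * y from rfl,
          h1]
        linear_combination (v * u ⟨i.val + 1, by have := i.isLt; omega⟩) * h3
      · rw [hstep i,
          show (!![w, f ^ 2 * y; y, w] : Matrix (Fin 2) (Fin 2) ℂ) 1 0 = y from rfl,
          show (!![w, f ^ 2 * y; y, w] : Matrix (Fin 2) (Fin 2) ℂ) 1 1 = w from rfl]
        linear_combination (u ⟨i.val + 1, by have := i.isLt; omega⟩) * h3
    · apply key (n := n) (i := i.val) ⟨i.val, by have := i.isLt; omega⟩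
        ⟨i.val + 1, by have := i.isLt; omega⟩ rfl rfl
      · rw [hstep i]; simp
      · rw [hstep i]; simp [hv]
  have hune : u ≠ 0 := by
    intro h
    have := congrFun h ⟨0, by omega⟩
    simp [hu] at this
    exact hv this.1
  refine ⟨hfix, ?_, ?_, ?_⟩
  · simp [Submodule.span_singleton_eq_bot, hune]
  · intro htop
    have hmem : (Pi.single (⟨0, by omega⟩ : Fin n) 1 : Fin n → ℂ) ∈
        Submodule.span ℂ {u} := htop ▸ Submodule.mem_top
    rw [Submodule.mem_span_singleton] at hmem
    obtain ⟨c, hc⟩ := hmem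
    have h0 := congrFun hc ⟨0, by omega⟩
    have h1' := congrFun hc ⟨1, by omega⟩
    simp [hu, Pi.single_apply, Fin.ext_iff] at h0 h1'
    rcases h1' with h1' | h1'
    · subst h1'; simp at h0
    · exact hv h1'.1
  · intro M hM x hx
    rw [Submodule.mem_span_singleton] at hx ⊢
    obtain ⟨c, rfl⟩ := hx
    exact ⟨c, by rw [Matrix.mulVec_smul, hfix M hM]⟩
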